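/- Suppose a sequence (θ_k) in ℝ^n and a function F = ψ_d + ψ_e satisfy: (i) ψ_d is L-smooth; (ii) for each k, (θ_k − θ_{k+1})ᵀ∇ψ_d(θ_k) ≥ (α/β)‖θ_{k+1} − θ_k‖² + ψ_e(θ_{k+1}) − ψ_e(θ_k) with step size 0 < β < 2α/L; (iii) F is bounded below. Then F(θ_{k+1}) ≤ F(θ_k) − (α/β − L/2)‖θ_{k+1} − θ_k‖² for all k, and consequently ‖θ_{k+1} − θ_k‖ → 0 as k → ∞. -/

import Mathlib

open RealInnerProductSpace Filter

lemma descent_lemma {E : Type*} [NormedAddCommGroup E] [InnerProductSpace ℝ E]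
    [CompleteSpace E] (f : E → ℝ) (L : ℝ) (hdiff : Differentiable ℝ f)
    (hlip : ∀ x y : E, ‖gradient f x - gradient f y‖ ≤ L * ‖x - y‖) (x y : E) :
    f y ≤ f x + ⟪gradient f x, y - x⟫ + L / 2 * ‖y - x‖ ^ 2 := by
  set d := y - x with hd
  -- derivative along the segment
  have key : ∀ t : ℝ, HasDerivAt (fun t : ℝ => f (x + t • d))
      ⟪gradient f (x + t • d), d⟫ t := by
    intro t
    have h1 : HasDerivAt (fun t : ℝ => x + t • d) d t := by
      simpa using ((hasDerivAt_id t).smul_const d).const_add x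
    have h2 := ((hdiff (x + t • d)).hasGradientAt).hasFDerivAt.comp_hasDerivAt t h1
    simpa [gradient, InnerProductSpace.toDual_symm_apply, Function.comp_def] using h2
  -- continuity of the gradient
  have hgc : Continuous (gradient f) := by
    have : LipschitzWith L.toNNReal (gradient f) := by
      apply LipschitzWith.of_dist_le_mul
      intro a b
      rw [dist_eq_norm, dist_eq_norm]
      exact (hlip a b).trans
        (mul_le_mul_of_nonneg_right (Real.le_coe_toNNReal L) (norm_nonneg _))
    exact this.continuous
  have hcont : Continuous fun t : ℝ => ⟪gradient f (x + t • d), d⟫ :=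
    (hgc.comp (continuous_const.add (continuous_id.smul continuous_const))).inner
      continuous_const
  have hint : f y - f x = ∫ t in (0:ℝ)..1, ⟪gradient f (x + t • d), d⟫ := by
    have := intervalIntegral.integral_eq_sub_of_hasDerivAt
      (f := fun t : ℝ => f (x + t • d)) (fun t _ => key t)
      (hcont.intervalIntegrable 0 1)
    rw [this]
    simp [hd]
  -- bound the integral
  have hbound : (∫ t in (0:ℝ)..1, ⟪gradient f (x + t • d), d⟫)
      ≤ ∫ t in (0:ℝ)..1, (⟪gradient f x, d⟫ + L * ‖d‖ ^ 2 * t) := by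
    apply intervalIntegral.integral_mono_on (by norm_num)
      (hcont.intervalIntegrable 0 1)
      ((by fun_prop : Continuous fun t : ℝ => ⟪gradient f x, d⟫ + L * ‖d‖ ^ 2 * t).intervalIntegrable 0 1)
    intro t ht
    obtain ⟨ht0, ht1⟩ := ht
    have h1 : ⟪gradient f (x + t • d), d⟫
        = ⟪gradient f x, d⟫ + ⟪gradient f (x + t • d) - gradient f x, d⟫ := by
      rw [inner_sub_left]; ring
    rw [h1]
    have h2 : ⟪gradient f (x + t • d) - gradient f x, d⟫ ≤ L * ‖d‖ ^ 2 * t := by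
      calc ⟪gradient f (x + t • d) - gradient f x, d⟫
          ≤ ‖gradient f (x + t • d) - gradient f x‖ * ‖d‖ := real_inner_le_norm _ _
        _ ≤ (L * ‖x + t • d - x‖) * ‖d‖ :=
            mul_le_mul_of_nonneg_right (hlip _ _) (norm_nonneg _)
        _ = L * ‖d‖ ^ 2 * t := by
            rw [show x + t • d - x = t • d by abel, norm_smul, Real.norm_eq_abs,
              abs_of_nonneg ht0]
            ring
    linarith
  have hval : (∫ t in (0:ℝ)..1, (⟪gradient f x, d⟫ + L * ‖d‖ ^ 2 * t))
      = ⟪gradient f x, d⟫ + L / 2 * ‖d‖ ^ 2 := by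
    rw [intervalIntegral.integral_add (intervalIntegrable_const)
      ((by fun_prop : Continuous fun t : ℝ => L * ‖d‖ ^ 2 * t).intervalIntegrable 0 1),
      intervalIntegral.integral_const_mul, integral_id]
    simp
    ring
  linarith [hint, hbound.trans_eq hval]

/-- Descent of `F = ψd + ψe` along the KL-proximal iterates and vanishing step sizes. -/
theorem stmt1 {n : ℕ} (ψd ψe : EuclideanSpace ℝ (Fin n) → ℝ)
    (θ : ℕ → EuclideanSpace ℝ (Fin n)) (L α β : ℝ)
    (hdiff : Differentiable ℝ ψd)
    (hlip : ∀ x y : EuclideanSpace ℝ (Fin n),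
      ‖gradient ψd x - gradient ψd y‖ ≤ L * ‖x - y‖)
    (hβpos : 0 < β) (hβ : β < 2 * α / L)
    (hstep : ∀ k : ℕ,
      ⟪θ k - θ (k + 1), gradient ψd (θ k)⟫ ≥
        α / β * ‖θ (k + 1) - θ k‖ ^ 2 + ψe (θ (k + 1)) - ψe (θ k))
    (hbdd : BddBelow (Set.range fun x => ψd x + ψe x)) :
    (∀ k : ℕ,
      ψd (θ (k + 1)) + ψe (θ (k + 1)) ≤
        ψd (θ k) + ψe (θ k) - (α / β - L / 2) * ‖θ (k + 1) - θ k‖ ^ 2) ∧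
    Tendsto (fun k => ‖θ (k + 1) - θ k‖) atTop (nhds 0) := by
  -- the descent inequality
  have h1 : ∀ k : ℕ,
      ψd (θ (k + 1)) + ψe (θ (k + 1)) ≤
        ψd (θ k) + ψe (θ k) - (α / β - L / 2) * ‖θ (k + 1) - θ k‖ ^ 2 := by
    intro k
    have hdesc := descent_lemma ψd L hdiff hlip (θ k) (θ (k + 1))
    have hs := hstep k
    have hinner : ⟪θ k - θ (k + 1), gradient ψd (θ k)⟫
        = - ⟪gradient ψd (θ k), θ (k + 1) - θ k⟫ := by
      rw [← neg_sub (θ (k + 1)) (θ k), inner_neg_left, real_inner_comm]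
    rw [hinner] at hs
    nlinarith [hs, hdesc]
  refine ⟨h1, ?_⟩
  -- degenerate case `n = 0`
  rcases Nat.eq_zero_or_pos n with hn | hn
  · subst hn
    have : ∀ k, ‖θ (k + 1) - θ k‖ = 0 := by
      intro k; simp [EuclideanSpace.norm_eq]
    simpa [this] using tendsto_const_nhds (α := ℕ) (x := (0 : ℝ))
  -- `L > 0`, so the descent coefficient is positive
  have hL0 : 0 ≤ L := by
    set v : EuclideanSpace ℝ (Fin n) := EuclideanSpace.single ⟨0, hn⟩ 1
    have hv : ‖v - 0‖ = 1 := by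
      simp [v, EuclideanSpace.norm_single]
    have := (norm_nonneg (gradient ψd v - gradient ψd 0)).trans (hlip v 0)
    rw [hv] at this; linarith
  have hLpos : 0 < L := by
    rcases hL0.lt_or_eq with h | h
    · exact h
    · exfalso; rw [← h] at hβ; simp at hβ; linarith
  have hc : 0 < α / β - L / 2 := by
    rw [lt_div_iff₀ hLpos] at hβ
    rw [sub_pos, div_lt_div_iff₀ (by norm_num) hβpos]
    linarith
  set c := α / β - L / 2 with hcdef
  set F : ℕ → ℝ := fun k => ψd (θ k) + ψe (θ k) with hF
  have hmono : ∀ k, F (k + 1) ≤ F k - c * ‖θ (k + 1) - θ k‖ ^ 2 := h1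
  have hanti : Antitone F := antitone_nat_of_succ_le fun k => by
    have := hmono k
    nlinarith [sq_nonneg ‖θ (k + 1) - θ k‖]
  have hFbdd : BddBelow (Set.range F) := by
    obtain ⟨m, hm⟩ := hbdd
    exact ⟨m, by rintro _ ⟨k, rfl⟩; exact hm ⟨θ k, rfl⟩⟩
  have hFlim : Tendsto F atTop (nhds (⨅ k, F k)) :=
    tendsto_atTop_ciInf hanti hFbdd
  have hdiff0 : Tendsto (fun k => F k - F (k + 1)) atTop (nhds 0) := by
    have := hFlim.sub (hFlim.comp (tendsto_add_atTop_nat 1))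
    simpa using this
  have hsq : Tendsto (fun k => c * ‖θ (k + 1) - θ k‖ ^ 2) atTop (nhds 0) := by
    apply squeeze_zero (fun k => by positivity) (fun k => by linarith [hmono k]) hdiff0
  have hsq2 : Tendsto (fun k => ‖θ (k + 1) - θ k‖ ^ 2) atTop (nhds 0) := by
    have := hsq.const_mul c⁻¹
    simpa [← mul_assoc, inv_mul_cancel₀ hc.ne'] using this
  have := (Real.continuous_sqrt.tendsto 0).comp hsq2
  simp only [Real.sqrt_zero] at this
  convert this using 2 with k
  simp [Function.comp, Real.sqrt_sq (norm_nonneg _)]
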